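/- Let 𝕏, 𝕐 be bounded planar domains and h : 𝕏 → 𝕐 a harmonic map (both coordinates harmonic) that is monotone, proper, surjective, with Jacobian J_h ≥ 0 a.e. and J_h not identically zero. Then J_h > 0 everywhere in 𝕏 and h is a local diffeomorphism; combined with monotonicity, h is a (harmonic) diffeomorphism of 𝕏 onto 𝕐. -/

import Mathlib

open Complex MeasureTheory Metric Filter
open scoped Real Topology

/-- Wirtinger derivative ∂f/∂z = (∂f/∂x - i ∂f/∂y)/2. -/
noncomputable def wz (f : ℂ → ℂ) (z : ℂ) : ℂ :=
  (fderiv ℝ f z 1 - Complex.I * fderiv ℝ f z Complex.I) / 2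

/-- Wirtinger derivative ∂f/∂z̄ = (∂f/∂x + i ∂f/∂y)/2. -/
noncomputable def wzbar (f : ℂ → ℂ) (z : ℂ) : ℂ :=
  (fderiv ℝ f z 1 + Complex.I * fderiv ℝ f z Complex.I) / 2

/-- Complex Laplacian Δf = ∂²f/∂x² + ∂²f/∂y². -/
noncomputable def lapC (f : ℂ → ℂ) (z : ℂ) : ℂ :=
  fderiv ℝ (fun w => fderiv ℝ f w 1) z 1 + fderiv ℝ (fun w => fderiv ℝ f w Complex.I) z Complex.I

section Auxiliary

open intervalIntegral

lemma clm_decomp (L : ℂ →L[ℝ] ℂ) (v : ℂ) : L v = v.re • L 1 + v.im • L I := by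
  have hv : v = v.re • (1:ℂ) + v.im • I := by
    simp [Complex.real_smul, Complex.ext_iff]
  conv_lhs => rw [hv]
  rw [map_add, L.map_smul, L.map_smul]

lemma hasDerivAt_of_CR {f : ℂ → ℂ} {E : ℂ →L[ℝ] ℂ} {z : ℂ}
    (hf : HasFDerivAt f E z) (hCR : E I = I * E 1) : HasDerivAt f (E 1) z := by
  have hE : ∀ v, E v = v * E 1 := by
    intro v
    rw [clm_decomp E v, hCR, Complex.real_smul, Complex.real_smul]
    have h2 : (v.re : ℂ) * E 1 + (v.im:ℂ) * (I * E 1) = ((v.re:ℂ) + v.im*I) * E 1 := by ring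
    rw [h2, Complex.re_add_im]
  have : HasFDerivAt f (((1 : ℂ →L[ℂ] ℂ).smulRight (E 1)).restrictScalars ℝ) z := by
    convert hf using 1
    ext v
    simp [hE v, smul_eq_mul, mul_comm]
  exact hasFDerivAt_of_restrictScalars ℝ this rfl

lemma fderiv_decomp_wirt (L : ℂ →L[ℝ] ℂ) (v : ℂ) :
    L v = v * ((L 1 - I * L I)/2) + (starRingEnd ℂ) v * ((L 1 + I * L I)/2) := by
  rw [clm_decomp L v]
  obtain ⟨x, y⟩ := v
  have h1 : Complex.mk x y = (x:ℂ) + y * I := Complex.mk_eq_add_mul_I x y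
  have h2 : (starRingEnd ℂ) ((x:ℂ) + y * I) = (x:ℂ) - y * I := by
    simp [Complex.conj_ofReal]; ring
  rw [h1, h2]
  simp only [Complex.real_smul]
  push_cast
  simp only [Complex.add_re, Complex.add_im, Complex.ofReal_re, Complex.ofReal_im,
    Complex.mul_re, Complex.mul_im, Complex.I_re, Complex.I_im]
  push_cast
  ring_nf
  linear_combination ((y:ℂ) * L I) * Complex.I_sq

theorem wirt_holo {X : Set ℂ} (hX : IsOpen X) {h : ℂ → ℂ}
    (hsm : ContDiffOn ℝ 2 h X) (hharm : ∀ z ∈ X, lapC h z = 0) :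
    DifferentiableOn ℂ (wz h) X ∧
      DifferentiableOn ℂ (fun z => (starRingEnd ℂ) (wzbar h z)) X := by
  set H : ℂ → (ℂ →L[ℝ] ℂ) := fderiv ℝ h with hHdef
  have h2 : ((2:WithTop ℕ∞)) = 1 + 1 := by norm_num
  rw [h2] at hsm
  have hH : ContDiffOn ℝ 1 H X := ((contDiffOn_succ_iff_fderiv_of_isOpen hX).mp hsm).2.2
  have key : ∀ z ∈ X, DifferentiableAt ℂ (wz h) z ∧
      DifferentiableAt ℂ (fun w => (starRingEnd ℂ) (wzbar h w)) z := by
    intro z hz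
    have hHz : HasFDerivAt H (fderiv ℝ H z) z :=
      ((hH.differentiableOn (by norm_num)).differentiableAt (hX.mem_nhds hz)).hasFDerivAt
    set B := fderiv ℝ H z with hBdef
    have hev : ∀ᶠ y in 𝓝 z, HasFDerivAt h (H y) y := by
      filter_upwards [hX.mem_nhds hz] with y hy
      exact ((hsm.differentiableOn (by norm_num)).differentiableAt (hX.mem_nhds hy)).hasFDerivAt
    have hsymm : ∀ v w, B v w = B w v :=
      fun v w => second_derivative_symmetric_of_eventually hev hHz v w
    have hc : ∀ c : ℂ, HasFDerivAt (fun w => H w c) ((ContinuousLinearMap.apply ℝ ℂ c).comp B) z :=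
      fun c => (ContinuousLinearMap.apply ℝ ℂ c).hasFDerivAt.comp z hHz
    have hharm' : B 1 1 + B I I = 0 := by
      have := hharm z hz
      unfold lapC at this
      rwa [(hc 1).fderiv, (hc I).fderiv] at this
    have hII : B I I = -(B 1 1) := eq_neg_of_add_eq_zero_right hharm'
    -- the wz part
    constructor
    · have hE : HasFDerivAt (wz h)
          (((2:ℂ)⁻¹ • ((ContinuousLinearMap.apply ℝ ℂ 1).comp B
            - I • (ContinuousLinearMap.apply ℝ ℂ I).comp B)) : ℂ →L[ℝ] ℂ) z := by
        have h0 := ((hc 1).sub ((hc I).const_mul I)).const_mul ((2:ℂ)⁻¹)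
        have hfe : wz h = fun x => (2:ℂ)⁻¹ * (H x 1 - I * H x I) := by
          funext x; simp [wz, div_eq_inv_mul, hHdef]
        rw [hfe]; exact h0
      refine (hasDerivAt_of_CR hE ?_).differentiableAt
      simp only [ContinuousLinearMap.smul_apply, ContinuousLinearMap.sub_apply,
        ContinuousLinearMap.comp_apply, ContinuousLinearMap.apply_apply, smul_eq_mul]
      rw [hsymm I 1, hII]
      linear_combination ((2:ℂ)⁻¹ * B 1 I) * Complex.I_sq
    · have hE2 : HasFDerivAt (fun w => (starRingEnd ℂ) (wzbar h w))
          ((Complex.conjCLE.toContinuousLinearMap.comp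
            ((2:ℂ)⁻¹ • ((ContinuousLinearMap.apply ℝ ℂ 1).comp B
            + I • (ContinuousLinearMap.apply ℝ ℂ I).comp B))) : ℂ →L[ℝ] ℂ) z := by
        have hinner : HasFDerivAt (wzbar h)
            (((2:ℂ)⁻¹ • ((ContinuousLinearMap.apply ℝ ℂ 1).comp B
              + I • (ContinuousLinearMap.apply ℝ ℂ I).comp B)) : ℂ →L[ℝ] ℂ) z := by
          have h0 := ((hc 1).add ((hc I).const_mul I)).const_mul ((2:ℂ)⁻¹)
          have hfe : wzbar h = fun x => (2:ℂ)⁻¹ * (H x 1 + I * H x I) := by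
            funext x; simp [wzbar, div_eq_inv_mul, hHdef]
          rw [hfe]; exact h0
        exact Complex.conjCLE.toContinuousLinearMap.hasFDerivAt.comp z hinner
      refine (hasDerivAt_of_CR hE2 ?_).differentiableAt
      simp only [ContinuousLinearMap.comp_apply, ContinuousLinearMap.smul_apply,
        ContinuousLinearMap.add_apply, ContinuousLinearMap.apply_apply, smul_eq_mul,
        ContinuousLinearEquiv.coe_coe, Complex.conjCLE_apply, map_mul, map_add]
      rw [hsymm I 1, hII]
      simp only [map_mul, map_add, map_neg, Complex.conj_I, map_inv₀, map_ofNat]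
      linear_combination ((starRingEnd ℂ) (B 1 I)/2) * Complex.I_sq
  exact ⟨fun z hz => ((key z hz).1).differentiableWithinAt,
    fun z hz => ((key z hz).2).differentiableWithinAt⟩

-- a.e. inequality of continuous functions on open set holds everywhere
lemma ae_to_everywhere {X : Set ℂ} (hX : IsOpen X) {F : ℂ → ℝ}
    (hF : ContinuousOn F X)
    (hae : ∀ᵐ z : ℂ ∂volume, z ∈ X → 0 ≤ F z) : ∀ z ∈ X, 0 ≤ F z := by
  intro z hz
  by_contra hlt
  push_neg at hlt
  have hca : ContinuousAt F z := hF.continuousAt (hX.mem_nhds hz)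
  have hev : ∀ᶠ w in 𝓝 z, F w < 0 := hca.eventually (eventually_lt_nhds hlt)
  obtain ⟨r, hr, hball⟩ := Metric.mem_nhds_iff.mp (hev.and (hX.mem_nhds hz))
  have hnull : volume {w : ℂ | ¬(w ∈ X → 0 ≤ F w)} = 0 := by
    simpa [ae_iff] using hae
  have hsub : ball z r ⊆ {w : ℂ | ¬(w ∈ X → 0 ≤ F w)} := by
    intro w hw
    obtain ⟨h1, h2⟩ := hball hw
    simp only [Set.mem_setOf_eq]
    intro hc
    exact absurd (hc h2) (not_le.mpr h1)
  have := measure_mono_null hsub hnull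
  exact absurd this (ne_of_gt (measure_ball_pos volume z hr))

-- identity-theorem contradiction: local proportionality with |c| = 1 is impossible
lemma no_local_prop {X : Set ℂ} (hXo : IsOpen X) (hXc : IsPreconnected X)
    {f g : ℂ → ℂ} (hf : DifferentiableOn ℂ f X) (hg : DifferentiableOn ℂ g X)
    {z0 : ℂ} (hz0 : z0 ∈ X) (hne : ‖g z0‖ ≠ ‖f z0‖)
    {c : ℂ} (hc : ‖c‖ = 1) {z1 : ℂ} (hz1 : z1 ∈ X)
    (hloc : ∀ᶠ w in 𝓝 z1, g w = c * f w) : False := by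
  have hgan := hg.analyticOnNhd hXo
  have hfan : AnalyticOnNhd ℂ (fun w => c * f w) X :=
    (analyticOnNhd_const).mul (hf.analyticOnNhd hXo)
  have heq := hgan.eqOn_of_preconnected_of_eventuallyEq hfan hXc hz1 hloc
  have := heq hz0
  rw [this] at hne
  simp [hc] at hne
-- f cannot vanish on a neighborhood of a point of X
lemma f_not_loc_zero {X : Set ℂ} (hXo : IsOpen X) (hXc : IsPreconnected X)
    {f g : ℂ → ℂ} (hf : DifferentiableOn ℂ f X) (hg : DifferentiableOn ℂ g X)
    (hle : ∀ z ∈ X, ‖g z‖ ≤ ‖f z‖)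
    {z0 : ℂ} (hz0 : z0 ∈ X) (hne : ‖g z0‖ ≠ ‖f z0‖)
    {z1 : ℂ} (hz1 : z1 ∈ X) (hloc : ∀ᶠ w in 𝓝 z1, f w = 0) : False := by
  have heq := (hf.analyticOnNhd hXo).eqOn_zero_of_preconnected_of_eventuallyEq_zero hXc hz1 hloc
  have h1 : f z0 = 0 := heq hz0
  have h2 := hle z0 hz0
  rw [h1] at h2 hne
  simp only [norm_zero] at h2 hne
  exact hne (le_antisymm h2 (norm_nonneg _))

-- strict inequality at noncritical points
lemma strict_at_noncrit {X : Set ℂ} (hXo : IsOpen X) (hXc : IsPreconnected X)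
    {f g : ℂ → ℂ} (hf : DifferentiableOn ℂ f X) (hg : DifferentiableOn ℂ g X)
    (hle : ∀ z ∈ X, ‖g z‖ ≤ ‖f z‖)
    {z0 : ℂ} (hz0 : z0 ∈ X) (hne : ‖g z0‖ ≠ ‖f z0‖)
    {z1 : ℂ} (hz1 : z1 ∈ X) (hf1 : f z1 ≠ 0) : ‖g z1‖ < ‖f z1‖ := by
  rcases lt_or_eq_of_le (hle z1 hz1) with hlt | heq
  · exact hlt
  exfalso
  have hfc : ContinuousAt f z1 := (hf.continuousOn.continuousAt (hXo.mem_nhds hz1))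
  have hev : ∀ᶠ w in 𝓝 z1, f w ≠ 0 ∧ w ∈ X :=
    (hfc.eventually_ne hf1).and (hXo.mem_nhds hz1)
  obtain ⟨r, hr, hball⟩ := Metric.mem_nhds_iff.mp hev
  set ν : ℂ → ℂ := fun w => g w / f w with hν
  have hνd : DifferentiableOn ℂ ν (ball z1 r) := by
    apply DifferentiableOn.div (hg.mono (fun w hw => (hball hw).2))
      (hf.mono (fun w hw => (hball hw).2))
    exact fun w hw => (hball hw).1
  have hfz1m : z1 ∈ ball z1 r := mem_ball_self hr
  have hmax : IsMaxOn (norm ∘ ν) (ball z1 r) z1 := by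
    intro w hw
    have h1 : ‖ν w‖ ≤ 1 := by
      rw [hν]
      simp only [norm_div]
      exact div_le_one_of_le₀ (hle w (hball hw).2) (norm_nonneg _)
    have h2 : ‖ν z1‖ = 1 := by
      rw [hν]; simp only [norm_div]
      rw [heq]
      exact div_self (norm_ne_zero_iff.mpr hf1)
    simp only [Function.comp_apply, Set.mem_setOf_eq]
    rw [h2]; exact h1
  have heqν := Complex.eqOn_of_isPreconnected_of_isMaxOn_norm
    (convex_ball z1 r).isPreconnected isOpen_ball hνd hfz1m hmax
  have hcn : ‖ν z1‖ = 1 := by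
    rw [hν]; simp only [norm_div]; rw [heq]
    exact div_self (norm_ne_zero_iff.mpr hf1)
  refine no_local_prop hXo hXc hf hg hz0 hne hcn hz1 ?_
  filter_upwards [Metric.ball_mem_nhds z1 hr] with w hw
  have := heqν hw
  simp only [Function.const_apply] at this
  have hfw : f w ≠ 0 := (hball hw).1
  simp only [hν] at this ⊢
  field_simp
  field_simp at this
  linear_combination this

/-- The invertible real-linear map `v ↦ a v + b v̄` when `|b| < |a|`. -/
noncomputable def wirtLE (a b : ℂ) (hne : Complex.normSq a - Complex.normSq b ≠ 0) :
    ℂ ≃ₗ[ℝ] ℂ where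
  toFun v := a * v + b * (starRingEnd ℂ) v
  map_add' x y := by simp only [map_add]; ring
  map_smul' r x := by
    simp only [Complex.real_smul, map_mul, Complex.conj_ofReal, RingHom.id_apply]; ring
  invFun w := ((starRingEnd ℂ) a * w - b * (starRingEnd ℂ) w) /
    ((Complex.normSq a - Complex.normSq b : ℝ) : ℂ)
  left_inv v := by
    have hd : ((Complex.normSq a - Complex.normSq b : ℝ) : ℂ) ≠ 0 := by
      exact_mod_cast hne
    have ha : (starRingEnd ℂ) a * a = ((Complex.normSq a : ℝ) : ℂ) := by
      rw [mul_comm, Complex.mul_conj]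
    have hb : (starRingEnd ℂ) b * b = ((Complex.normSq b : ℝ) : ℂ) := by
      rw [mul_comm, Complex.mul_conj]
    simp only [map_add, map_mul, Complex.conj_conj]
    rw [div_eq_iff hd]
    push_cast
    linear_combination v * ha - v * hb
  right_inv w := by
    have hd : ((Complex.normSq a - Complex.normSq b : ℝ) : ℂ) ≠ 0 := by
      exact_mod_cast hne
    have ha : a * (starRingEnd ℂ) a = ((Complex.normSq a : ℝ) : ℂ) := Complex.mul_conj a
    have hb : b * (starRingEnd ℂ) b = ((Complex.normSq b : ℝ) : ℂ) := Complex.mul_conj b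
    simp only [map_div₀, map_sub, map_mul, Complex.conj_conj, Complex.conj_ofReal]
    rw [← mul_div_assoc, ← mul_div_assoc, ← add_div, div_eq_iff hd]
    push_cast
    linear_combination w * ha - w * hb
  
lemma norm_lt_normSq_sub_ne {a b : ℂ} (hlt : ‖b‖ < ‖a‖) :
    Complex.normSq a - Complex.normSq b ≠ 0 := by
  have h1 : Complex.normSq b < Complex.normSq a := by
    rw [Complex.normSq_eq_norm_sq, Complex.normSq_eq_norm_sq]
    have hb := norm_nonneg b
    nlinarith
  exact sub_ne_zero.mpr (ne_of_gt h1)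

lemma loc_inj {X : Set ℂ} (hX : IsOpen X) {h : ℂ → ℂ} (hsm : ContDiffOn ℝ 2 h X)
    {z : ℂ} (hz : z ∈ X) (hlt : ‖wzbar h z‖ < ‖wz h z‖) :
    ∃ U : Set ℂ, IsOpen U ∧ z ∈ U ∧ U ⊆ X ∧ Set.InjOn h U := by
  have hne := norm_lt_normSq_sub_ne hlt
  set ℓ := (wirtLE (wz h z) (wzbar h z) hne).toContinuousLinearEquiv with hℓ
  have hd : fderiv ℝ h z = (ℓ : ℂ →L[ℝ] ℂ) := by
    ext v
    have := fderiv_decomp_wirt (fderiv ℝ h z) v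
    rw [this]
    show _ = (wirtLE (wz h z) (wzbar h z) hne) v
    show _ = wz h z * v + wzbar h z * (starRingEnd ℂ) v
    rw [wz, wzbar]; ring
  have hstrict : HasStrictFDerivAt h (ℓ : ℂ →L[ℝ] ℂ) z := by
    have h12 : (1:WithTop ℕ∞) ≤ 2 := by norm_num
    have := (hsm.contDiffAt (hX.mem_nhds hz)).hasStrictFDerivAt (by norm_num)
    rwa [hd] at this
  refine ⟨(hstrict.toOpenPartialHomeomorph h).source ∩ X,
    ((hstrict.toOpenPartialHomeomorph h).open_source).inter hX,
    ⟨hstrict.mem_toOpenPartialHomeomorph_source, hz⟩, Set.inter_subset_right, ?_⟩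
  have hinj := (hstrict.toOpenPartialHomeomorph h).injOn
  rw [hstrict.toOpenPartialHomeomorph_coe] at hinj
  exact hinj.mono Set.inter_subset_left

lemma preconn_isolated {S : Set ℂ} (hS : IsPreconnected S) {p : ℂ} (hp : p ∈ S) {U : Set ℂ}
    (hU : IsOpen U) (hpU : p ∈ U) (hiso : S ∩ U ⊆ {p}) : S ⊆ {p} := by
  by_contra hq
  obtain ⟨q, hqS, hqp⟩ : ∃ q ∈ S, q ≠ p := by
    obtain ⟨q, h1, h2⟩ := Set.not_subset.mp hq
    exact ⟨q, h1, fun he => h2 (he ▸ rfl)⟩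
  have := hS U {p}ᶜ hU isOpen_compl_singleton
    (fun w hw => by
      by_cases hwp : w = p
      · exact Or.inl (hwp ▸ hpU)
      · exact Or.inr hwp)
    ⟨p, hp, hpU⟩ ⟨q, hqS, hqp⟩
  obtain ⟨x, hxS, hxU, hxC⟩ := this
  exact hxC (hiso ⟨hxS, hxU⟩)

lemma uIcc_abs_bound {a b t x : ℝ} (hx : x ∈ Set.uIcc a b) : |x - t| ≤ max |a - t| |b - t| := by
  rcases Set.mem_uIcc.mp hx with ⟨h1, h2⟩ | ⟨h1, h2⟩ <;>
  · refine abs_le.mpr ⟨?_, ?_⟩ <;>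
      linarith [le_abs_self (a - t), le_abs_self (b - t), neg_abs_le (a - t), neg_abs_le (b - t),
        le_max_left |a - t| |b - t|, le_max_right |a - t| |b - t|]

theorem exists_primitive {φ : ℂ → ℂ} {c : ℂ} {R : ℝ} (hR : 0 < R)
    (hφ : DifferentiableOn ℂ φ (ball c R)) :
    ∃ Φ : ℂ → ℂ, ∀ w ∈ ball c (R/2), HasDerivAt Φ (φ w) w := by
  have hφc : ContinuousOn φ (ball c R) := hφ.continuousOn
  have hmem : ∀ x y : ℝ, |x - c.re| < R/2 → |y - c.im| < R/2 → (x:ℂ) + y*I ∈ ball c R := by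
    intro x y hx hy
    rw [mem_ball, dist_eq]
    calc ‖(x:ℂ) + y*I - c‖ ≤ |((x:ℂ) + y*I - c).re| + |((x:ℂ) + y*I - c).im| :=
          Complex.norm_le_abs_re_add_abs_im _
      _ = |x - c.re| + |y - c.im| := by simp
      _ < R := by linarith
  set Q : Set ℂ := {p : ℂ | |p.re - c.re| < R/2 ∧ |p.im - c.im| < R/2} with hQ
  have hQopen : IsOpen Q := by
    apply IsOpen.inter
    · exact isOpen_lt (continuous_abs.comp ((Complex.continuous_re).sub continuous_const))
        continuous_const
    · exact isOpen_lt (continuous_abs.comp ((Complex.continuous_im).sub continuous_const))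
        continuous_const
  have hhor : ∀ (a b y : ℝ), |a - c.re| < R/2 → |b - c.re| < R/2 → |y - c.im| < R/2 →
      IntervalIntegrable (fun x : ℝ => φ ((x:ℂ) + y*I)) volume a b := by
    intro a b y ha hb hy
    apply ContinuousOn.intervalIntegrable
    apply hφc.comp (Continuous.continuousOn (by continuity))
    intro x hx
    exact hmem x y (lt_of_le_of_lt (uIcc_abs_bound hx) (max_lt ha hb)) hy
  have hver : ∀ (x a b : ℝ), |x - c.re| < R/2 → |a - c.im| < R/2 → |b - c.im| < R/2 →
      IntervalIntegrable (fun y : ℝ => φ ((x:ℂ) + y*I)) volume a b := by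
    intro x a b hx ha hb
    apply ContinuousOn.intervalIntegrable
    apply hφc.comp (Continuous.continuousOn (by continuity))
    intro y hy
    exact hmem x y hx (lt_of_le_of_lt (uIcc_abs_bound hy) (max_lt ha hb))
  set Φ : ℂ → ℂ := fun p =>
    (∫ x in c.re..p.re, φ ((x:ℂ) + c.im*I)) + I • ∫ y in c.im..p.im, φ ((p.re:ℂ) + y*I)
    with hΦ
  have hcc : |c.re - c.re| < R/2 := by simp; positivity
  have hci : |c.im - c.im| < R/2 := by simp; positivity
  have halt : ∀ p ∈ Q,
      Φ p = (I • ∫ y in c.im..p.im, φ ((c.re:ℂ) + y*I)) + ∫ x in c.re..p.re, φ ((x:ℂ) + p.im*I) := by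
    intro p hp
    have hrect := Complex.integral_boundary_rect_eq_zero_of_differentiableOn φ c p
      (hφ.mono ?_)
    · rw [hΦ]
      simp only []
      linear_combination hrect
    · intro z hz
      rw [Complex.mem_reProdIm] at hz
      rw [← Complex.re_add_im z]
      exact hmem z.re z.im
        (lt_of_le_of_lt (uIcc_abs_bound hz.1) (max_lt hcc hp.1))
        (lt_of_le_of_lt (uIcc_abs_bound hz.2) (max_lt hci hp.2))
  refine ⟨Φ, fun w hw => ?_⟩
  have hwQ : w ∈ Q := by
    rw [mem_ball, dist_eq] at hw
    constructor
    · exact lt_of_le_of_lt (by simpa using Complex.abs_re_le_norm (w - c)) hw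
    · exact lt_of_le_of_lt (by simpa using Complex.abs_im_le_norm (w - c)) hw
  have hincr : ∀ p ∈ Q, Φ p - Φ w =
      (∫ x in w.re..p.re, φ ((x:ℂ) + w.im*I)) + I • ∫ y in w.im..p.im, φ ((p.re:ℂ) + y*I) := by
    intro p hp
    have hqre : ((p.re:ℂ) + (w.im:ℂ)*I).re = p.re := by simp
    have hqim : ((p.re:ℂ) + (w.im:ℂ)*I).im = w.im := by simp
    have hqQ : ((p.re:ℂ) + (w.im:ℂ)*I) ∈ Q := by
      constructor
      · rw [hqre]; exact hp.1
      · rw [hqim]; exact hwQ.2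
    have e1 : Φ p - Φ ((p.re:ℂ) + (w.im:ℂ)*I) = I • ∫ y in w.im..p.im, φ ((p.re:ℂ) + y*I) := by
      have hsub : (∫ y in c.im..p.im, φ ((p.re:ℂ) + y*I)) - (∫ y in c.im..w.im, φ ((p.re:ℂ) + y*I))
          = ∫ y in w.im..p.im, φ ((p.re:ℂ) + y*I) :=
        integral_interval_sub_left (hver p.re c.im p.im hp.1 hci hp.2)
          (hver p.re c.im w.im hp.1 hci hwQ.2)
      rw [hΦ]
      simp only [hqre, hqim, smul_eq_mul]
      linear_combination I * hsub
    have e2 : Φ ((p.re:ℂ) + (w.im:ℂ)*I) - Φ w = ∫ x in w.re..p.re, φ ((x:ℂ) + w.im*I) := by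
      have hsub : (∫ x in c.re..p.re, φ ((x:ℂ) + w.im*I)) - (∫ x in c.re..w.re, φ ((x:ℂ) + w.im*I))
          = ∫ x in w.re..p.re, φ ((x:ℂ) + w.im*I) :=
        integral_interval_sub_left (hhor c.re p.re w.im hcc hp.1 hwQ.2)
          (hhor c.re w.re w.im hcc hwQ.1 hwQ.2)
      rw [halt _ hqQ, halt _ hwQ]
      simp only [hqre, hqim, smul_eq_mul]
      linear_combination hsub
    linear_combination e1 + e2
  rw [hasDerivAt_iff_isLittleO, Asymptotics.isLittleO_iff]
  intro ε hε
  have hcont : ContinuousAt φ w :=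
    hφc.continuousAt (Metric.isOpen_ball.mem_nhds (ball_subset_ball (by linarith) hw))
  obtain ⟨δ, hδ, hδball⟩ := Metric.continuousAt_iff.mp hcont (ε/2) (by positivity)
  filter_upwards [hQopen.mem_nhds hwQ, Metric.ball_mem_nhds w (show (0:ℝ) < δ/2 by positivity)]
    with p hpQ hpd
  have hdist : dist p w < δ/2 := mem_ball.mp hpd
  have hre : |p.re - w.re| ≤ ‖p - w‖ := by
    simpa using Complex.abs_re_le_norm (p - w)
  have him : |p.im - w.im| ≤ ‖p - w‖ := by
    simpa using Complex.abs_im_le_norm (p - w)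
  have hpw : ‖p - w‖ < δ/2 := by rwa [dist_eq_norm] at hdist
  have hA : (∫ x in w.re..p.re, φ ((x:ℂ) + w.im*I)) - ((p.re - w.re : ℝ):ℂ) * φ w
      = ∫ x in w.re..p.re, (φ ((x:ℂ) + w.im*I) - φ w) := by
    rw [integral_sub (hhor w.re p.re w.im hwQ.1 hpQ.1 hwQ.2) intervalIntegrable_const,
      intervalIntegral.integral_const, Complex.real_smul]
  have hB : (∫ y in w.im..p.im, φ ((p.re:ℂ) + y*I)) - ((p.im - w.im : ℝ):ℂ) * φ w
      = ∫ y in w.im..p.im, (φ ((p.re:ℂ) + y*I) - φ w) := by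
    rw [integral_sub (hver p.re w.im p.im hpQ.1 hwQ.2 hpQ.2) intervalIntegrable_const,
      intervalIntegral.integral_const, Complex.real_smul]
  have hsplit : (p - w) • φ w = ((p.re - w.re : ℝ):ℂ) * φ w + I * (((p.im - w.im : ℝ):ℂ) * φ w) := by
    have : (p - w) = ((p.re - w.re : ℝ):ℂ) + ((p.im - w.im : ℝ):ℂ) * I := by
      simp [Complex.ext_iff]
    rw [smul_eq_mul, this]; ring
  have hrew : Φ p - Φ w - (p - w) • φ w =
      (∫ x in w.re..p.re, (φ ((x:ℂ) + w.im*I) - φ w))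
        + I • (∫ y in w.im..p.im, (φ ((p.re:ℂ) + y*I) - φ w)) := by
    rw [hincr p hpQ, hsplit]
    simp only [smul_eq_mul]
    linear_combination hA + I * hB
  rw [hrew]
  have hAb : ‖∫ x in w.re..p.re, (φ ((x:ℂ) + w.im*I) - φ w)‖ ≤ (ε/2) * |p.re - w.re| := by
    apply intervalIntegral.norm_integral_le_of_norm_le_const
    intro x hx
    have hx' : x ∈ Set.uIcc w.re p.re := Set.uIoc_subset_uIcc hx
    have h1 : |x - w.re| ≤ |p.re - w.re| := by
      have := uIcc_abs_bound (t := w.re) hx'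
      simpa using this
    have hdist2 : dist ((x:ℂ) + w.im*I) w < δ := by
      rw [dist_eq]
      have habs : ‖(x:ℂ) + w.im*I - w‖ = |x - w.re| := by
        have hwid : ((x:ℂ) + w.im*I - w) = ((x - w.re : ℝ):ℂ) := by
          simp [Complex.ext_iff]
        rw [hwid, Complex.norm_real, Real.norm_eq_abs]
      rw [habs]
      calc |x - w.re| ≤ |p.re - w.re| := h1
        _ ≤ ‖p - w‖ := hre
        _ < δ/2 := hpw
        _ < δ := by linarith
    have := hδball hdist2
    rw [dist_eq_norm] at this
    exact le_of_lt this
  have hBb : ‖∫ y in w.im..p.im, (φ ((p.re:ℂ) + y*I) - φ w)‖ ≤ (ε/2) * |p.im - w.im| := by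
    apply intervalIntegral.norm_integral_le_of_norm_le_const
    intro y hy
    have hy' := Set.uIoc_subset_uIcc hy
    have h1 : |y - w.im| ≤ |p.im - w.im| := by simpa using uIcc_abs_bound (t := w.im) hy'
    have hdist2 : dist ((p.re:ℂ) + y*I) w < δ := by
      rw [dist_eq]
      calc ‖(p.re:ℂ) + y*I - w‖ ≤ |((p.re:ℂ) + y*I - w).re| + |((p.re:ℂ)+y*I-w).im| :=
            Complex.norm_le_abs_re_add_abs_im _
        _ = |p.re - w.re| + |y - w.im| := by simp
        _ ≤ ‖p - w‖ + ‖p - w‖ := add_le_add hre (le_trans h1 him)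
        _ < δ := by linarith
    have := hδball hdist2
    rw [dist_eq_norm] at this
    exact le_of_lt this
  calc ‖(∫ x in w.re..p.re, (φ ((x:ℂ) + w.im*I) - φ w))
        + I • (∫ y in w.im..p.im, (φ ((p.re:ℂ) + y*I) - φ w))‖
      ≤ ‖∫ x in w.re..p.re, (φ ((x:ℂ) + w.im*I) - φ w)‖
        + ‖I • (∫ y in w.im..p.im, (φ ((p.re:ℂ) + y*I) - φ w))‖ := norm_add_le _ _
    _ = ‖∫ x in w.re..p.re, (φ ((x:ℂ) + w.im*I) - φ w)‖
        + ‖∫ y in w.im..p.im, (φ ((p.re:ℂ) + y*I) - φ w)‖ := by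
          rw [norm_smul, Complex.norm_I, one_mul]
    _ ≤ (ε/2) * |p.re - w.re| + (ε/2) * |p.im - w.im| := add_le_add hAb hBb
    _ ≤ ε * ‖p - w‖ := by nlinarith [norm_nonneg (p - w), abs_nonneg (p.re - w.re), abs_nonneg (p.im - w.im)]

theorem exists_root_factor {Ψ : ℂ → ℂ} {z1 : ℂ} {r0 : ℝ} (hr0 : 0 < r0)
    (hΨ : DifferentiableOn ℂ Ψ (ball z1 r0))
    (h0 : Ψ z1 = 0) (hd : deriv Ψ z1 = 0) (hnt : ¬ (∀ᶠ w in 𝓝 z1, Ψ w = 0)) :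
    ∃ (k : ℕ) (ρ : ℂ → ℂ) (r : ℝ), 2 ≤ k ∧ 0 < r ∧ r ≤ r0 ∧
      DifferentiableOn ℂ ρ (ball z1 r) ∧ ρ z1 = 0 ∧ deriv ρ z1 ≠ 0 ∧
      ∀ w ∈ ball z1 r, Ψ w = (ρ w) ^ k := by
  have hAn : AnalyticAt ℂ Ψ z1 := (hΨ.analyticOnNhd isOpen_ball) z1 (mem_ball_self hr0)
  have hord : analyticOrderAt Ψ z1 ≠ ⊤ := by
    rw [Ne, analyticOrderAt_eq_top]; exact hnt
  obtain ⟨k, hk⟩ : ∃ k : ℕ, analyticOrderAt Ψ z1 = k := by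
    rcases ENat.ne_top_iff_exists.mp hord with ⟨k, hk⟩
    exact ⟨k, hk.symm⟩
  obtain ⟨gg, hgan, hgne, heva⟩ := hAn.analyticOrderAt_eq_natCast.mp hk
  have hk0 : k ≠ 0 := by
    intro hk0
    rw [hk0] at heva
    have := heva.self_of_nhds
    simp only [pow_zero, one_smul] at this
    exact hgne (this ▸ h0)
  have hk1 : k ≠ 1 := by
    intro hk1
    rw [hk1] at heva
    have hder : deriv Ψ z1 = deriv (fun w => (w - z1) * gg w) z1 := by
      apply Filter.EventuallyEq.deriv_eq
      filter_upwards [heva] with w hw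
      rw [hw]; simp [smul_eq_mul]
    have hdg : HasDerivAt (fun w => (w - z1) * gg w) (gg z1) z1 := by
      have h1 : HasDerivAt (fun w : ℂ => w - z1) 1 z1 := (hasDerivAt_id z1).sub_const z1
      have h2 : HasDerivAt gg (deriv gg z1) z1 := hgan.differentiableAt.hasDerivAt
      have := h1.mul h2
      exact this.congr_deriv (by simp)
    rw [hder, hdg.deriv] at hd
    exact hgne hd
  have hk2 : 2 ≤ k := by omega
  -- shrink to a good ball
  have hc : ContinuousAt gg z1 := hgan.continuousAt
  have hev0 : ∀ᶠ w in 𝓝 z1, gg w ≠ 0 := hc.eventually_ne hgne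
  have hevd : ∀ᶠ w in 𝓝 z1, DifferentiableAt ℂ gg w := by
    filter_upwards [hgan.eventually_analyticAt] with w hw
    exact hw.differentiableAt
  have hevs : ∀ᶠ w in 𝓝 z1, gg w / gg z1 ∈ Complex.slitPlane := by
    have hco : ContinuousAt (fun w => gg w / gg z1) z1 := hc.div_const _
    have h1m : gg z1 / gg z1 ∈ Complex.slitPlane := by
      rw [div_self hgne]; exact Complex.one_mem_slitPlane
    exact hco.eventually_mem (Complex.isOpen_slitPlane.mem_nhds h1m)
  obtain ⟨r1, hr1, hball⟩ := Metric.eventually_nhds_iff.mp (heva.and (hev0.and (hevd.and hevs)))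
  set r := min r1 r0 with hrdef
  have hrpos : 0 < r := lt_min hr1 hr0
  set f2 : ℂ → ℂ := fun w => Complex.exp ((Complex.log (gg w / gg z1) + Complex.log (gg z1)) / k)
    with hf2
  set ρ : ℂ → ℂ := fun w => (w - z1) * f2 w with hρ
  have hprops : ∀ w, dist w z1 < r1 →
      (Ψ w = (w - z1)^k • gg w ∧ gg w ≠ 0 ∧ DifferentiableAt ℂ gg w ∧
        gg w / gg z1 ∈ Complex.slitPlane) := by
    intro w hw
    obtain ⟨h1, h2, h3, h4⟩ := hball hw
    exact ⟨h1, h2, h3, h4⟩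
  have hdf2 : ∀ w, dist w z1 < r1 → DifferentiableAt ℂ f2 w := by
    intro w hw
    obtain ⟨-, h2, h3, h4⟩ := hprops w hw
    apply DifferentiableAt.cexp
    apply DifferentiableAt.div_const
    apply DifferentiableAt.add_const
    exact DifferentiableAt.clog (h3.div_const _) h4
  refine ⟨k, ρ, r, hk2, hrpos, min_le_right _ _, ?_, by simp [hρ], ?_, ?_⟩
  · intro w hw
    have hw1 : dist w z1 < r1 := lt_of_lt_of_le (mem_ball.mp hw) (min_le_left _ _)
    exact (((differentiableAt_id.sub_const z1).mul (hdf2 w hw1))).differentiableWithinAt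
  · have hd2 : DifferentiableAt ℂ f2 z1 := hdf2 z1 (by simpa using hr1)
    have hder : HasDerivAt ρ (f2 z1) z1 := by
      have h1 : HasDerivAt (fun w : ℂ => w - z1) 1 z1 := (hasDerivAt_id z1).sub_const z1
      have := h1.mul hd2.hasDerivAt
      exact this.congr_deriv (by simp)
    rw [hder.deriv]
    exact Complex.exp_ne_zero _
  · intro w hw
    have hw1 : dist w z1 < r1 := lt_of_lt_of_le (mem_ball.mp hw) (min_le_left _ _)
    obtain ⟨h1, h2, -, -⟩ := hprops w hw1
    have hkc : (k:ℂ) ≠ 0 := Nat.cast_ne_zero.mpr hk0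
    rw [h1, hρ]
    simp only [smul_eq_mul, mul_pow]
    congr 1
    rw [hf2]
    rw [← Complex.exp_nat_mul]
    rw [mul_div_cancel₀ _ hkc]
    rw [Complex.exp_add, Complex.exp_log (div_ne_zero h2 hgne), Complex.exp_log hgne]
    rw [div_mul_cancel₀ _ hgne]

lemma cos_half_add_nat (j : ℕ) : Real.cos (π/2 + j*π) = 0 := by
  induction j with
  | zero => simp
  | succ n ih =>
      have he : π/2 + (n+1:ℕ)*π = (π/2 + n*π) + π := by push_cast; ring
      rw [he, Real.cos_add_pi, ih, neg_zero]

lemma exp_I_inj_small {θ θ' : ℝ} (hd : |θ - θ'| < 2*π)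
    (he : Complex.exp (θ*I) = Complex.exp (θ'*I)) : θ = θ' := by
  obtain ⟨n, hn⟩ := Complex.exp_eq_exp_iff_exists_int.mp he
  have hz : ((θ - θ' - (n:ℝ)*(2*π) : ℝ) : ℂ) * I = 0 := by
    push_cast
    linear_combination hn
  have hre : (θ - θ' - (n:ℝ)*(2*π) : ℝ) = 0 := by
    rcases mul_eq_zero.mp hz with h1 | h1
    · exact_mod_cast h1
    · exact absurd h1 Complex.I_ne_zero
  have hnr : θ - θ' = (n:ℝ) * (2*π) := by linarith
  have habs : |θ - θ'| = |(n:ℝ)| * (2*π) := by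
    rw [hnr, abs_mul, abs_of_pos (by positivity : (0:ℝ) < 2*π)]
  have h2 : |(n:ℝ)| * (2*π) < 2*π := habs ▸ hd
  have hn0 : (n:ℝ) = 0 := by
    by_contra hn0
    have h1 : (1:ℝ) ≤ |(n:ℝ)| := by
      have hne : n ≠ 0 := fun hh => hn0 (by exact_mod_cast hh)
      exact_mod_cast Int.one_le_abs hne
    nlinarith [Real.pi_pos]
  rw [hn0] at hnr
  linarith

theorem lewy_no_crit {X : Set ℂ} (hXo : IsOpen X) {h f g : ℂ → ℂ}
    (hhc : ContinuousOn h X)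
    (hdF : ∀ z ∈ X, HasFDerivAt h (fderiv ℝ h z) z)
    (hdec : ∀ z ∈ X, ∀ v, fderiv ℝ h z v = v * f z + (starRingEnd ℂ) v * (starRingEnd ℂ) (g z))
    (hfd : DifferentiableOn ℂ f X) (hgd : DifferentiableOn ℂ g X)
    (hinj : Set.InjOn h X)
    {z1 : ℂ} (hz1 : z1 ∈ X) (hf0 : f z1 = 0) (hg0 : g z1 = 0)
    (hnt : ¬ (∀ᶠ w in 𝓝 z1, f w + g w = 0)) : False := by
  obtain ⟨R, hR, hRX⟩ := Metric.isOpen_iff.mp hXo z1 hz1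
  have hφd : DifferentiableOn ℂ (fun w => f w + g w) (ball z1 R) :=
    (hfd.mono hRX).add (hgd.mono hRX)
  obtain ⟨Φ, hΦ⟩ := exists_primitive hR hφd
  have hR2 : (0:ℝ) < R/2 := by positivity
  have hsub2 : ball z1 (R/2) ⊆ X := fun w hw => hRX (ball_subset_ball (by linarith) hw)
  have hz1b : z1 ∈ ball z1 (R/2) := mem_ball_self hR2
  -- Re h - Re Φ is constant on ball z1 (R/2)
  have hconst : ∀ w ∈ ball z1 (R/2), (h w).re - (Φ w).re = (h z1).re - (Φ z1).re := by
    have hkey : ∀ w ∈ ball z1 (R/2),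
        HasFDerivWithinAt (fun p => (h p).re - (Φ p).re) (0 : ℂ →L[ℝ] ℝ) (ball z1 (R/2)) w := by
      intro w hw
      have hwX : w ∈ X := hsub2 hw
      have h1 : HasFDerivAt (fun p => h p - Φ p)
          (fderiv ℝ h w - ((1 : ℂ →L[ℂ] ℂ).smulRight (f w + g w)).restrictScalars ℝ) w :=
        (hdF w hwX).sub ((hΦ w hw).hasFDerivAt.restrictScalars ℝ)
      have h2 := (Complex.reCLM.hasFDerivAt.comp w h1)
      have h3 : (Complex.reCLM.comp
          (fderiv ℝ h w - ((1 : ℂ →L[ℂ] ℂ).smulRight (f w + g w)).restrictScalars ℝ))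
          = (0 : ℂ →L[ℝ] ℝ) := by
        ext v
        simp only [ContinuousLinearMap.comp_apply, ContinuousLinearMap.sub_apply,
          ContinuousLinearMap.coe_restrictScalars', ContinuousLinearMap.smulRight_apply,
          ContinuousLinearMap.one_apply, Complex.reCLM_apply, ContinuousLinearMap.zero_apply,
          smul_eq_mul]
        rw [hdec w hwX v]
        simp only [Complex.sub_re, Complex.add_re, Complex.add_im, Complex.mul_re,
          Complex.conj_re, Complex.conj_im]
        ring
      rw [h3] at h2
      exact h2.hasFDerivWithinAt
    intro w hw
    have := (convex_ball z1 (R/2)).norm_image_sub_le_of_norm_hasFDerivWithin_le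
      (C := 0) hkey (fun x _ => by simp) hz1b hw
    simp only [norm_zero, zero_mul] at this
    have h0 : ‖((h w).re - (Φ w).re) - ((h z1).re - (Φ z1).re)‖ ≤ 0 := this
    have := norm_le_zero_iff.mp h0
    linarith [sub_eq_zero.mp this]
  -- the function Ψ
  set Ψ : ℂ → ℂ := fun w => Φ w - Φ z1 with hΨdef
  have hΨd : DifferentiableOn ℂ Ψ (ball z1 (R/2)) := fun w hw =>
    (((hΦ w hw).differentiableAt.sub_const _)).differentiableWithinAt
  have hΨ0 : Ψ z1 = 0 := by simp [hΨdef]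
  have hΨderiv : ∀ w ∈ ball z1 (R/2), deriv Ψ w = f w + g w := by
    intro w hw
    exact (((hΦ w hw).sub_const _)).deriv
  have hΨd0 : deriv Ψ z1 = 0 := by rw [hΨderiv z1 hz1b, hf0, hg0, add_zero]
  have hΨnt : ¬ (∀ᶠ w in 𝓝 z1, Ψ w = 0) := by
    intro hev
    apply hnt
    have hd0 : ∀ᶠ w in 𝓝 z1, deriv Ψ w = 0 := by
      have : Ψ =ᶠ[𝓝 z1] (fun _ => (0:ℂ)) := hev
      filter_upwards [this.eventuallyEq_nhds] with w hw
      rw [hw.deriv_eq]; simp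
    filter_upwards [hd0, isOpen_ball.eventually_mem hz1b] with w h1 h2
    rw [← hΨderiv w h2, h1]
  obtain ⟨k, ρ, r, hk2, hrpos, hrle, hρd, hρ0, hρd0, hfact⟩ :=
    exists_root_factor hR2 hΨd hΨ0 hΨd0 hΨnt
  -- local homeomorphism from ρ
  have hρan : AnalyticAt ℂ ρ z1 := (hρd.analyticOnNhd isOpen_ball) z1 (mem_ball_self hrpos)
  obtain ⟨p, hp⟩ := hρan
  have hstrict : HasStrictDerivAt ρ (deriv ρ z1) z1 := by
    have h1 := hp.hasStrictDerivAt
    rwa [← hp.hasDerivAt.deriv] at h1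
  have hstrictF : HasStrictFDerivAt ρ
      ((ContinuousLinearEquiv.unitsEquivAut ℂ (Units.mk0 _ hρd0) : ℂ ≃L[ℂ] ℂ) : ℂ →L[ℂ] ℂ) z1 := by
    have heq : ((ContinuousLinearEquiv.unitsEquivAut ℂ (Units.mk0 _ hρd0) : ℂ ≃L[ℂ] ℂ) : ℂ →L[ℂ] ℂ)
        = ContinuousLinearMap.smulRight (1 : ℂ →L[ℂ] ℂ) (deriv ρ z1) := by
      ext v
      simp [ContinuousLinearEquiv.unitsEquivAut, mul_comm]
    rw [heq]
    exact hasStrictDerivAt_iff_hasStrictFDerivAt.mp hstrict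
  set e := hstrictF.toOpenPartialHomeomorph ρ with hedef
  have hecoe : ∀ w, e w = ρ w := by
    intro w; rw [hedef, hstrictF.toOpenPartialHomeomorph_coe]
  have hz1e : z1 ∈ e.source := hstrictF.mem_toOpenPartialHomeomorph_source
  have hz1im : e z1 = 0 := by rw [hecoe, hρ0]
  set O := e.source ∩ ball z1 r with hOdef
  have hOopen : IsOpen O := e.open_source.inter isOpen_ball
  have hz1O : z1 ∈ O := ⟨hz1e, mem_ball_self hrpos⟩
  set W := e '' O with hWdef
  have hWopen : IsOpen W := e.isOpen_image_of_subset_source hOopen Set.inter_subset_left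
  have hWt : W ⊆ e.target := by
    rintro u ⟨x, hxO, rfl⟩
    exact e.map_source hxO.1
  have h0W : (0:ℂ) ∈ W := ⟨z1, hz1O, hz1im⟩
  obtain ⟨ε2, hε2, hball0⟩ := Metric.isOpen_iff.mp hWopen 0 h0W
  set ε := ε2/2 with hεdef
  have hεpos : 0 < ε := by positivity
  have hsegW : ∀ (u : ℂ), ‖u‖ ≤ ε → u ∈ W := by
    intro u hu
    apply hball0
    rw [mem_ball, dist_zero_right]
    calc ‖u‖ ≤ ε := hu
      _ < ε2 := by rw [hεdef]; linarith
  have hWsrc : ∀ u ∈ W, e.symm u ∈ O ∧ e (e.symm u) = u := by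
    intro u hu
    obtain ⟨x, hxO, hxe⟩ := hu
    have hxs : x ∈ e.source := hxO.1
    have hsx : e.symm u = x := by rw [← hxe, e.left_inv hxs]
    refine ⟨by rw [hsx]; exact hxO, ?_⟩
    rw [hsx, hxe]
  -- directions
  have hkR : (2:ℝ) ≤ (k:ℝ) := by exact_mod_cast hk2
  have hkpos : (0:ℝ) < (k:ℝ) := by linarith
  have hk0 : k ≠ 0 := by omega
  set θa : ℕ → ℝ := fun j => (π/2 + j*π)/k with hθdef
  set d : ℕ → ℂ := fun j => Complex.exp ((θa j : ℝ) * I) with hddef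
  have hdabs : ∀ j, ‖d j‖ = 1 := fun j => Complex.norm_exp_ofReal_mul_I _
  have hdne0 : ∀ j, d j ≠ 0 := by
    intro j hj
    have := hdabs j
    rw [hj] at this
    simp at this
  have hdne : ∀ i j : ℕ, i ≤ 2 → j ≤ 2 → i ≠ j → d i ≠ d j := by
    intro i j hi hj hij hd
    have hdiff : θa i - θa j = (((i:ℝ) - j)*π)/k := by
      simp only [hθdef]; ring
    have hijR : (i:ℝ) - j ≠ 0 := by
      rw [sub_ne_zero]
      exact_mod_cast hij
    have hiR : (i:ℝ) ≤ 2 := by exact_mod_cast hi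
    have hjR : (j:ℝ) ≤ 2 := by exact_mod_cast hj
    have habs2 : |(i:ℝ) - j| ≤ 2 := by
      refine abs_le.mpr ⟨?_, ?_⟩ <;>
        [linarith [Nat.cast_nonneg (α := ℝ) i]; linarith [Nat.cast_nonneg (α := ℝ) j]]
    have hsmall : |θa i - θa j| < 2*π := by
      rw [hdiff, abs_div, abs_mul, abs_of_pos hkpos, abs_of_pos Real.pi_pos,
        div_lt_iff₀ hkpos]
      nlinarith [Real.pi_pos]
    have := exp_I_inj_small hsmall hd
    rw [sub_eq_zero.mpr this] at hdiff
    exact (div_ne_zero (mul_ne_zero hijR Real.pi_ne_zero) (ne_of_gt hkpos)) hdiff.symm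
  have hdk : ∀ j : ℕ, (d j)^k = Complex.exp ((↑(π/2 + j*π) : ℂ) * I) := by
    intro j
    have hθk : (k:ℝ) * θa j = π/2 + j*π := by
      rw [hθdef]; field_simp
    calc (Complex.exp ((θa j : ℝ) * I))^k
        = Complex.exp ((k:ℂ) * ((θa j : ℝ) * I)) := (Complex.exp_nat_mul _ k).symm
      _ = Complex.exp ((↑(π/2 + j*π) : ℂ) * I) := by
          rw [show ((k:ℂ) * (((θa j : ℝ):ℂ) * I)) = ((((k:ℝ) * θa j : ℝ)):ℂ) * I by
            push_cast; ring, hθk]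
  -- arcs
  set γ : ℕ → ℝ → ℂ := fun j t => e.symm ((t:ℂ) * d j) with hγdef
  have harc : ∀ (j : ℕ) (t : ℝ), 0 ≤ t → t ≤ ε →
      γ j t ∈ O ∧ e (γ j t) = (t:ℂ) * d j := by
    intro j t ht0 htε
    apply hWsrc
    apply hsegW
    rw [show ‖(t:ℂ) * d j‖ = ‖(t:ℂ)‖ * ‖d j‖ from
      norm_mul _ _, Complex.norm_real, Real.norm_eq_abs, hdabs, mul_one, _root_.abs_of_nonneg ht0]
    exact htε
  have hγX : ∀ (j : ℕ) (t : ℝ), 0 ≤ t → t ≤ ε → γ j t ∈ X := by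
    intro j t h1 h2
    exact hsub2 (ball_subset_ball hrle ((harc j t h1 h2).1.2))
  have hγ0 : ∀ j : ℕ, γ j 0 = z1 := by
    intro j
    show e.symm ((0:ℝ) * d j) = z1
    push_cast
    rw [zero_mul]
    calc e.symm 0 = e.symm (e z1) := by rw [hz1im]
      _ = z1 := e.left_inv hz1e
  have hre : ∀ (j : ℕ) (t : ℝ), 0 ≤ t → t ≤ ε → (h (γ j t)).re = (h z1).re := by
    intro j t h1 h2
    have hpO := (harc j t h1 h2).1
    have hpb2 : γ j t ∈ ball z1 (R/2) := ball_subset_ball hrle hpO.2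
    have hcon := hconst (γ j t) hpb2
    have hΨval : Ψ (γ j t) = ((t:ℂ) * d j)^k := by
      rw [hfact (γ j t) hpO.2, ← hecoe, (harc j t h1 h2).2]
    have hΨre : (Ψ (γ j t)).re = 0 := by
      rw [hΨval, mul_pow, hdk j]
      have ht : ((t:ℂ))^k = ((t^k : ℝ) : ℂ) := by push_cast; ring
      rw [ht, Complex.re_ofReal_mul, Complex.exp_ofReal_mul_I_re, cos_half_add_nat, mul_zero]
    have hΨre' : (Φ (γ j t)).re - (Φ z1).re = 0 := by
      have : (Ψ (γ j t)).re = (Φ (γ j t)).re - (Φ z1).re := by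
        rw [hΨdef]; simp [Complex.sub_re]
      rw [← this]; exact hΨre
    linarith
  -- the imaginary part along arcs
  set T : ℕ → ℝ → ℝ := fun j t => (h (γ j t)).im with hTdef
  set t0 : ℝ := (h z1).im with ht0def
  have hT0 : ∀ j, T j 0 = t0 := by
    intro j
    rw [hTdef, ht0def]
    simp only []
    rw [hγ0 j]
  have hTc : ∀ j : ℕ, ContinuousOn (T j) (Set.Icc 0 ε) := by
    intro j
    apply Complex.continuous_im.comp_continuousOn
    apply hhc.comp
    · apply e.continuousOn_symm.comp
      · exact Continuous.continuousOn (Complex.continuous_ofReal.mul continuous_const)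
      · intro t ht
        exact hWt (hsegW _ (by
          rw [show ‖(t:ℂ) * d j‖ = ‖(t:ℂ)‖ * ‖d j‖ from
            norm_mul _ _, Complex.norm_real, Real.norm_eq_abs, hdabs, mul_one, _root_.abs_of_nonneg ht.1]
          exact ht.2))
    · intro t ht
      exact hγX j t ht.1 ht.2
  have hγne : ∀ j : ℕ, γ j ε ≠ z1 := by
    intro j hje
    have h1 := (harc j ε hεpos.le le_rfl).2
    rw [hje, hz1im] at h1
    have : (ε:ℂ) * d j ≠ 0 :=
      mul_ne_zero (by exact_mod_cast ne_of_gt hεpos) (hdne0 j)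
    exact this h1.symm
  have hTne : ∀ j : ℕ, T j ε ≠ t0 := by
    intro j hTj
    have hne := hinj.ne (hγX j ε hεpos.le le_rfl) hz1 (hγne j)
    apply hne
    apply Complex.ext
    · exact hre j ε hεpos.le le_rfl
    · exact hTj
  -- same-side contradiction
  have hSmem : ∀ j : ℕ, t0 ∈ T j '' (Set.Icc 0 ε) ∧ T j ε ∈ T j '' (Set.Icc 0 ε) := by
    intro j
    constructor
    · exact ⟨0, ⟨le_refl 0, hεpos.le⟩, hT0 j⟩
    · exact ⟨ε, ⟨hεpos.le, le_refl ε⟩, rfl⟩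
  have hSpre : ∀ j : ℕ, IsPreconnected (T j '' (Set.Icc 0 ε)) :=
    fun j => isPreconnected_Icc.image (T j) (hTc j)
  have hmeet : ∀ i j : ℕ, i ≤ 2 → j ≤ 2 → i ≠ j →
      ∀ tt, tt ≠ t0 → tt ∈ T i '' (Set.Icc 0 ε) → tt ∈ T j '' (Set.Icc 0 ε) → False := by
    intro i j hi hj hij tt htt ⟨s, hs, hTs⟩ ⟨s', hs', hTs'⟩
    have hheq : h (γ i s) = h (γ j s') := by
      apply Complex.ext
      · rw [hre i s hs.1 hs.2, hre j s' hs'.1 hs'.2]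
      · rw [hTdef] at hTs hTs'
        simp only [] at hTs hTs'
        rw [hTs, hTs']
    have hγeq : γ i s = γ j s' :=
      hinj (hγX i s hs.1 hs.2) (hγX j s' hs'.1 hs'.2) hheq
    have heeq : (s:ℂ) * d i = (s':ℂ) * d j := by
      rw [← (harc i s hs.1 hs.2).2, ← (harc j s' hs'.1 hs'.2).2, hγeq]
    have habs : s = s' := by
      have := congrArg (‖·‖) heeq
      rw [show ‖(s:ℂ) * d i‖ = ‖(s:ℂ)‖ * ‖d i‖ from
        norm_mul _ _,
        show ‖(s':ℂ) * d j‖ = ‖(s':ℂ)‖ * ‖d j‖ from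
        norm_mul _ _, Complex.norm_real, Complex.norm_real, Real.norm_eq_abs, Real.norm_eq_abs, hdabs, hdabs,
        mul_one, mul_one, _root_.abs_of_nonneg hs.1, _root_.abs_of_nonneg hs'.1] at this
      exact this
    by_cases hs0 : s = 0
    · apply htt
      rw [← hTs, hs0, hT0 i]
    · have hsc : (s:ℂ) ≠ 0 := by exact_mod_cast hs0
      rw [← habs] at heeq
      have := mul_left_cancel₀ hsc heeq
      exact hdne i j hi hj hij this
  have hup : ∀ i j : ℕ, i ≤ 2 → j ≤ 2 → i ≠ j → t0 < T i ε → t0 < T j ε → False := by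
    intro i j hi hj hij hci hcj
    set tt := min (T i ε) (T j ε) with httdef
    have htt0 : t0 < tt := lt_min hci hcj
    have h1 : tt ∈ T i '' (Set.Icc 0 ε) :=
      (hSpre i).Icc_subset (hSmem i).1 (hSmem i).2 ⟨htt0.le, min_le_left _ _⟩
    have h2 : tt ∈ T j '' (Set.Icc 0 ε) :=
      (hSpre j).Icc_subset (hSmem j).1 (hSmem j).2 ⟨htt0.le, min_le_right _ _⟩
    exact hmeet i j hi hj hij tt (ne_of_gt htt0) h1 h2
  have hdown : ∀ i j : ℕ, i ≤ 2 → j ≤ 2 → i ≠ j → T i ε < t0 → T j ε < t0 → False := by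
    intro i j hi hj hij hci hcj
    set tt := max (T i ε) (T j ε) with httdef
    have htt0 : tt < t0 := max_lt hci hcj
    have h1 : tt ∈ T i '' (Set.Icc 0 ε) :=
      (hSpre i).Icc_subset (hSmem i).2 (hSmem i).1 ⟨le_max_left _ _, htt0.le⟩
    have h2 : tt ∈ T j '' (Set.Icc 0 ε) :=
      (hSpre j).Icc_subset (hSmem j).2 (hSmem j).1 ⟨le_max_right _ _, htt0.le⟩
    exact hmeet i j hi hj hij tt (ne_of_lt htt0) h1 h2
  rcases lt_or_gt_of_ne (hTne 0) with h0 | h0 <;>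
    rcases lt_or_gt_of_ne (hTne 1) with h1 | h1 <;>
    rcases lt_or_gt_of_ne (hTne 2) with h2 | h2
  · exact hdown 0 1 (by norm_num) (by norm_num) (by norm_num) h0 h1
  · exact hdown 0 1 (by norm_num) (by norm_num) (by norm_num) h0 h1
  · exact hdown 0 2 (by norm_num) (by norm_num) (by norm_num) h0 h2
  · exact hup 1 2 (by norm_num) (by norm_num) (by norm_num) h1 h2
  · exact hdown 1 2 (by norm_num) (by norm_num) (by norm_num) h1 h2
  · exact hup 0 2 (by norm_num) (by norm_num) (by norm_num) h0 h2
  · exact hup 0 1 (by norm_num) (by norm_num) (by norm_num) h0 h1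
  · exact hup 0 1 (by norm_num) (by norm_num) (by norm_num) h0 h1

end Auxiliary

theorem stmt14 (X Y : Set ℂ) (hX : IsOpen X) (hXc : IsConnected X)
    (hXb : Bornology.IsBounded X)
    (hY : IsOpen Y) (hYc : IsConnected Y) (hYb : Bornology.IsBounded Y)
    (h : ℂ → ℂ)
    (hsm : ContDiffOn ℝ 2 h X)
    (hharm : ∀ z ∈ X, lapC h z = 0)
    (hmono : ∀ y ∈ Y, IsCompact {z ∈ X | h z = y} ∧ IsConnected {z ∈ X | h z = y})
    (hproper : ∀ K ⊆ Y, IsCompact K → IsCompact {z ∈ X | h z ∈ K})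
    (hsurj : h '' X = Y)
    (hjac : ∀ᵐ z : ℂ ∂volume, z ∈ X → ‖wzbar h z‖ ≤ ‖wz h z‖)
    (hnz : ∃ z ∈ X, ‖wzbar h z‖ ≠ ‖wz h z‖) :
    (∀ z ∈ X, ‖wzbar h z‖ < ‖wz h z‖) ∧
    Set.BijOn h X Y ∧
    (∀ z ∈ X, ∃ U : Set ℂ, IsOpen U ∧ z ∈ U ∧ U ⊆ X ∧ Set.InjOn h U) := by
  classical
  obtain ⟨hfd, hgd⟩ := wirt_holo hX hsm hharm
  set f : ℂ → ℂ := wz h with hfdef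
  set g : ℂ → ℂ := fun z => (starRingEnd ℂ) (wzbar h z) with hgdef
  have hgnorm : ∀ z, ‖g z‖ = ‖wzbar h z‖ := fun z => RCLike.norm_conj _
  have hXpre : IsPreconnected X := hXc.isPreconnected
  obtain ⟨z0, hz0, hz0ne⟩ := hnz
  have hz0ne' : ‖g z0‖ ≠ ‖f z0‖ := by rw [hgnorm]; exact hz0ne
  have hle : ∀ z ∈ X, ‖g z‖ ≤ ‖f z‖ := by
    intro z hz
    have hcont : ContinuousOn (fun w => ‖f w‖ - ‖g w‖) X :=
      (hfd.continuousOn.norm.sub hgd.continuousOn.norm)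
    have hae : ∀ᵐ w : ℂ ∂volume, w ∈ X → 0 ≤ ‖f w‖ - ‖g w‖ := by
      filter_upwards [hjac] with w hw hwX
      have := hw hwX
      rw [← hgnorm w] at this
      linarith
    linarith [ae_to_everywhere hX hcont hae z hz]
  have hdec : ∀ z ∈ X, ∀ v, fderiv ℝ h z v = v * f z + (starRingEnd ℂ) v * (starRingEnd ℂ) (g z) := by
    intro z hz v
    have hh := fderiv_decomp_wirt (fderiv ℝ h z) v
    rw [hfdef, hgdef]
    simp only [Complex.conj_conj]
    exact hh
  have hdF : ∀ z ∈ X, HasFDerivAt h (fderiv ℝ h z) z := fun z hz =>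
    ((hsm.differentiableOn (by norm_num)).differentiableAt (hX.mem_nhds hz)).hasFDerivAt
  have hhc : ContinuousOn h X := hsm.continuousOn
  have hstrict : ∀ z1 ∈ X, f z1 ≠ 0 → ‖g z1‖ < ‖f z1‖ := fun z1 h1 h2 =>
    strict_at_noncrit hX hXpre hfd hgd hle hz0 hz0ne' h1 h2
  have hmapsto : ∀ z ∈ X, h z ∈ Y := fun z hz => hsurj ▸ Set.mem_image_of_mem h hz
  -- global injectivity
  have hinj : Set.InjOn h X := by
    intro a ha b hb hab
    have hyY : h a ∈ Y := hmapsto a ha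
    obtain ⟨hScomp, hSconn⟩ := hmono (h a) hyY
    set S := {z ∈ X | h z = h a} with hSdef
    have haS : a ∈ S := ⟨ha, rfl⟩
    have hbS : b ∈ S := ⟨hb, hab.symm⟩
    have hiso : ∃ p ∈ S, ∃ U : Set ℂ, IsOpen U ∧ p ∈ U ∧ S ∩ U ⊆ {p} := by
      by_cases hcase : ∃ p ∈ S, f p ≠ 0
      · obtain ⟨p, hpS, hpf⟩ := hcase
        have hlt := hstrict p hpS.1 hpf
        obtain ⟨U, hU, hpU, hUX, hUinj⟩ := loc_inj hX hsm hpS.1 (by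
          rw [← hgnorm p]; exact hlt)
        refine ⟨p, hpS, U, hU, hpU, ?_⟩
        rintro x ⟨hxS, hxU⟩
        have hxp : h x = h p := by rw [hxS.2, hpS.2]
        exact hUinj hxU hpU hxp
      · push_neg at hcase
        have han : AnalyticAt ℂ f a := (hfd.analyticOnNhd hX) a ha
        rcases han.eventually_eq_zero_or_eventually_ne_zero with hev | hev
        · exact absurd (f_not_loc_zero hX hXpre hfd hgd hle hz0 hz0ne' ha hev) id
        · rw [eventually_nhdsWithin_iff] at hev
          obtain ⟨U, hUprop, hUopen, haU⟩ := _root_.eventually_nhds_iff.mp hev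
          refine ⟨a, haS, U, hUopen, haU, ?_⟩
          rintro x ⟨hxS, hxU⟩
          by_contra hxa
          have hxa' : x ∈ ({a}ᶜ : Set ℂ) := by simpa using hxa
          exact (hUprop x hxU hxa') (hcase x hxS)
    obtain ⟨p, hpS, U, hUo, hpU, hiso'⟩ := hiso
    have hsub := preconn_isolated hSconn.isPreconnected hpS hUo hpU hiso'
    have h1 : a = p := hsub haS
    have h2 : b = p := hsub hbS
    rw [h1, h2]
  -- no critical points
  have hnocrit : ∀ z1 ∈ X, f z1 ≠ 0 := by
    intro z1 hz1 hf1
    have hg1 : g z1 = 0 := by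
      have hh := hle z1 hz1
      rw [hf1, norm_zero] at hh
      exact norm_le_zero_iff.mp hh
    have hnt : ¬ (∀ᶠ w in 𝓝 z1, f w + g w = 0) := by
      intro hev
      apply no_local_prop hX hXpre hfd hgd hz0 hz0ne' (c := -1) (by simp) hz1
      filter_upwards [hev] with w hw
      linear_combination hw
    exact lewy_no_crit hX hhc hdF hdec hfd hgd hinj hz1 hf1 hg1 hnt
  have hpart1 : ∀ z ∈ X, ‖wzbar h z‖ < ‖wz h z‖ := by
    intro z hz
    rw [← hgnorm z]
    exact hstrict z hz (hnocrit z hz)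
  exact ⟨hpart1,
    ⟨fun z hz => hmapsto z hz, hinj, fun y hy => by rw [← hsurj] at hy; exact hy⟩,
    fun z hz => ⟨X, hX, hz, subset_rfl, hinj⟩⟩
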